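/- arXiv:1703.09279 — 4 statements merged into one kernel-verified Lean document; each statement's English description precedes it below -/
import Mathlib

section
/- Let F be the cdf of the uniform distribution on [a,b] with b > 2a > 0, k = b/a − 1, and y = (1/2)(1 − 1/k). Setting buyer price p = F^{-1}(y) = a(yk+1) and seller price q = F^{-1}(y²/2) = (a/2)(2 + y²k), the quantity (n/2)·F(q)·(1−F(p))·p − (n/2)·F(q)·q equals (a·k/128)·n·(1 − 1/k)^4. -/
theorem stmt12 (a b : ℝ) (ha : 0 < a) (hb : 2 * a < b)
    (k : ℝ) (hk : k = b / a - 1)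
    (y : ℝ) (hy : y = (1/2) * (1 - 1/k))
    (p : ℝ) (hpdef : p = a * (y * k + 1))
    (q : ℝ) (hqdef : q = (a/2) * (2 + y^2 * k))
    (F : ℝ → ℝ) (hF : ∀ x, F x = (x - a) / (a * k))
    (n : ℝ) :
    (n/2) * F q * (1 - F p) * p - (n/2) * F q * q =
      (a * k / 128) * n * (1 - 1/k)^4 := by
  have hk1 : 1 < k := by
    rw [hk]
    rw [lt_sub_iff_add_lt, lt_div_iff₀ ha]
    linarith
  have hk0 : k ≠ 0 := by linarith
  have ha0 : a ≠ 0 := ne_of_gt ha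
  subst hy hpdef hqdef
  rw [hF, hF]
  field_simp
  ring
end

section
/- Let F be a continuous cdf, π(t) = Π_{j=1}^{t−1} F(p_j), and λ(y) = ∫_y^∞ x f(x) dx. Swapping two adjacent buyer prices p_{t*} = α < β = p_{t*+1} in the sequence (keeping all others fixed) changes the welfare W(p) = μ + Σ_{t=1}^n π(t)·λ(p_t) by π(t*)·(1−F(α))·(1−F(β))·(E[Y | Y ≥ β] − E[Y | Y ≥ α]) ≥ 0; hence the buyer prices of a welfare-optimal posted-price sequence may be assumed nonincreasing. -/
open MeasureTheory

theorem stmt13 (f : ℝ → ℝ) (hf0 : ∀ x, 0 ≤ f x) (hfmeas : Measurable f)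
    (hfint : Integrable f) (hf1 : (∫ x, f x) = 1)
    (hxf : Integrable (fun x => x * f x))
    (F lam : ℝ → ℝ)
    (hFdef : ∀ x, F x = ∫ t in Set.Iic x, f t)
    (hlamdef : ∀ y, lam y = ∫ x in Set.Ici y, x * f x)
    (μ : ℝ) (hμ : μ = ∫ x, x * f x)
    (n : ℕ) (tstar : ℕ) (htn : tstar + 1 < n)
    (p p' : ℕ → ℝ) (α β : ℝ)
    (hα : p tstar = α) (hβ : p (tstar + 1) = β) (hab : α < β)
    (hp'1 : p' tstar = β) (hp'2 : p' (tstar + 1) = α)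
    (hp'3 : ∀ t, t ≠ tstar → t ≠ tstar + 1 → p' t = p t)
    (hFβ : F β < 1)
    (W : (ℕ → ℝ) → ℝ)
    (hW : ∀ pp, W pp =
      μ + ∑ t ∈ Finset.range n, (∏ j ∈ Finset.range t, F (pp j)) * lam (pp t)) :
    W p' - W p =
      (∏ j ∈ Finset.range tstar, F (p j)) * ((1 - F α) * (1 - F β) *
        (lam β / (1 - F β) - lam α / (1 - F α))) ∧
    0 ≤ W p' - W p := by
  have hFnn : ∀ x, 0 ≤ F x := fun x => by
    rw [hFdef]
    exact setIntegral_nonneg measurableSet_Iic fun t _ => hf0 t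
  have hsub : F β - F α = ∫ x in Set.Ioc α β, f x := by
    rw [hFdef, hFdef, ← Set.Iic_union_Ioc_eq_Iic hab.le,
      setIntegral_union (Set.Iic_disjoint_Ioc le_rfl) measurableSet_Ioc
        hfint.integrableOn hfint.integrableOn]
    ring
  have hBnn : 0 ≤ ∫ x in Set.Ioc α β, f x :=
    setIntegral_nonneg measurableSet_Ioc fun t _ => hf0 t
  have hFab : F α ≤ F β := by linarith
  have hFα1 : F α < 1 := lt_of_le_of_lt hFab hFβ
  have htail : 1 - F β = ∫ x in Set.Ioi β, f x := by
    have h := integral_add_compl (μ := volume) (measurableSet_Iic (a := β)) hfint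
    rw [Set.compl_Iic] at h
    rw [hFdef]
    linarith [h, hf1]
  have hd : Disjoint (Set.Ico α β) (Set.Ici β) :=
    Set.disjoint_left.mpr fun x hx hx2 => absurd hx.2 (not_lt.mpr hx2)
  have hlamsub : lam α - lam β = ∫ x in Set.Ico α β, x * f x := by
    rw [hlamdef, hlamdef, ← Set.Ico_union_Ici_eq_Ici hab.le,
      setIntegral_union hd measurableSet_Ici hxf.integrableOn hxf.integrableOn]
    ring
  have hIcoIoc : (∫ x in Set.Ico α β, f x) = ∫ x in Set.Ioc α β, f x := by
    rw [integral_Ico_eq_integral_Ioo, integral_Ioc_eq_integral_Ioo]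
  have h1 : (∫ x in Set.Ico α β, x * f x) ≤ β * ∫ x in Set.Ioc α β, f x := by
    rw [← hIcoIoc, ← integral_const_mul]
    refine setIntegral_mono_on hxf.integrableOn ((hfint.const_mul β).integrableOn)
      measurableSet_Ico fun x hx => ?_
    exact mul_le_mul_of_nonneg_right hx.2.le (hf0 x)
  have hIci : (∫ x in Set.Ici β, f x) = 1 - F β := by
    rw [htail, integral_Ici_eq_integral_Ioi]
  have h2 : β * (1 - F β) ≤ lam β := by
    rw [hlamdef, ← hIci, ← integral_const_mul]
    refine setIntegral_mono_on ((hfint.const_mul β).integrableOn) hxf.integrableOn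
      measurableSet_Ici fun x hx => ?_
    exact mul_le_mul_of_nonneg_right hx (hf0 x)
  have hFβnn : (0:ℝ) ≤ 1 - F β := by linarith
  have hexp : (1 - F α) * lam β - (1 - F β) * lam α
      = (∫ x in Set.Ioc α β, f x) * lam β
        - (1 - F β) * (∫ x in Set.Ico α β, x * f x) := by
    linear_combination (lam β) * hsub - (1 - F β) * hlamsub
  have hkey : 0 ≤ (1 - F α) * lam β - (1 - F β) * lam α := by
    rw [hexp]
    nlinarith [mul_nonneg hBnn (sub_nonneg.mpr h2), mul_nonneg hFβnn (sub_nonneg.mpr h1)]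
  -- sum manipulations
  set Pi0 := ∏ j ∈ Finset.range tstar, F (p j) with hPi
  have hPinn : 0 ≤ Pi0 := Finset.prod_nonneg fun j _ => hFnn _
  have hprodA : ∏ j ∈ Finset.range tstar, F (p' j) = Pi0 := by
    refine Finset.prod_congr rfl fun j hj => ?_
    have hjt := Finset.mem_range.mp hj
    rw [hp'3 j (by omega) (by omega)]
  have hprodC : ∀ t, tstar + 1 < t →
      ∏ j ∈ Finset.range t, F (p' j) = ∏ j ∈ Finset.range t, F (p j) := by
    intro t ht
    have h2' : tstar + 2 ≤ t := ht
    have hmid : ∏ j ∈ Finset.range (tstar+2), F (p' j)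
        = ∏ j ∈ Finset.range (tstar+2), F (p j) := by
      rw [Finset.prod_range_succ, Finset.prod_range_succ,
        Finset.prod_range_succ, Finset.prod_range_succ, hprodA, hp'1, hp'2, hα, hβ]
      ring
    rw [← Finset.prod_range_mul_prod_Ico (fun j => F (p' j)) h2',
      ← Finset.prod_range_mul_prod_Ico (fun j => F (p j)) h2', hmid]
    congr 1
    refine Finset.prod_congr rfl fun j hj => ?_
    have hjt := (Finset.mem_Ico.mp hj).1
    rw [hp'3 j (by omega) (by omega)]
  have hWdiff : W p' - W p = ∑ t ∈ Finset.range n,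
      ((∏ j ∈ Finset.range t, F (p' j)) * lam (p' t)
        - (∏ j ∈ Finset.range t, F (p j)) * lam (p t)) := by
    rw [hW, hW, Finset.sum_sub_distrib]
    ring
  have hpairsub : ({tstar, tstar+1} : Finset ℕ) ⊆ Finset.range n := by
    intro x hx
    simp only [Finset.mem_insert, Finset.mem_singleton] at hx
    simp only [Finset.mem_range]
    omega
  have hzero : ∀ t ∈ Finset.range n, t ∉ ({tstar, tstar+1} : Finset ℕ) →
      ((∏ j ∈ Finset.range t, F (p' j)) * lam (p' t)
        - (∏ j ∈ Finset.range t, F (p j)) * lam (p t)) = 0 := by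
    intro t _ ht
    simp only [Finset.mem_insert, Finset.mem_singleton, not_or] at ht
    obtain ⟨ht1, ht2⟩ := ht
    have hlameq : p' t = p t := hp'3 t ht1 ht2
    have hprodeq : ∏ j ∈ Finset.range t, F (p' j) = ∏ j ∈ Finset.range t, F (p j) := by
      rcases lt_or_ge (tstar+1) t with h | h
      · exact hprodC t h
      · refine Finset.prod_congr rfl fun j hj => ?_
        have hjt := Finset.mem_range.mp hj
        rw [hp'3 j (by omega) (by omega)]
    rw [hlameq, hprodeq]
    ring
  have hsum : W p' - W p = Pi0 * ((1 - F α) * lam β - (1 - F β) * lam α) := by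
    rw [hWdiff, ← Finset.sum_subset hpairsub hzero,
      Finset.sum_pair (by omega : tstar ≠ tstar + 1),
      Finset.prod_range_succ, Finset.prod_range_succ, hprodA, hp'1, hp'2, hα, hβ, ← hPi]
    ring
  have hne1 : (1:ℝ) - F α ≠ 0 := by linarith
  have hne2 : (1:ℝ) - F β ≠ 0 := by linarith
  constructor
  · rw [hsum]
    rw [hPi]
    congr 1
    field_simp
  · rw [hsum]
    exact mul_nonneg hPinn hkey
end

section
/- Let F be a cdf with mean μ and define λ(y) = ∫_y^∞ x dF(x) ≤ μ. For a nonincreasing price sequence (p_t) with c = F(p_k) < 1 at the first index k where F(p_k) < 1, the welfare W = μ + Σ_{t=1}^{n} (Π_{j<t} F(p_j))·λ(p_t) satisfies W ≤ (2−c)/(1−c) · μ, uniformly in n. -/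
theorem stmt14 (F lam : ℝ → ℝ) (μ : ℝ) (hμ0 : 0 ≤ μ)
    (hFmono : Monotone F) (hF01 : ∀ x, 0 ≤ F x ∧ F x ≤ 1)
    (hlam : ∀ y, 0 ≤ lam y ∧ lam y ≤ μ)
    (hlam0 : ∀ y, F y = 1 → lam y = 0)
    (p : ℕ → ℝ) (hp : Antitone p)
    (k : ℕ) (hk : ∀ j, j < k → F (p j) = 1)
    (c : ℝ) (hc : c = F (p k)) (hclt : c < 1) :
    ∀ n : ℕ,
      μ + ∑ t ∈ Finset.range n, (∏ j ∈ Finset.range t, F (p j)) * lam (p t) ≤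
        (2 - c) / (1 - c) * μ := by
  intro n
  have hc0 : 0 ≤ c := hc ▸ (hF01 (p k)).1
  have h1c : 0 < 1 - c := by linarith
  -- product bound
  have hprod : ∀ t, k ≤ t → (∏ j ∈ Finset.range t, F (p j)) ≤ c ^ (t - k) := by
    intro t ht
    induction t with
    | zero =>
      simp [Nat.le_zero.mp ht]
    | succ m ih =>
      rcases Nat.lt_or_ge m k with hm | hm
      · -- m < k ≤ m+1 so k = m+1
        have hkm : k = m + 1 := le_antisymm ht hm
        have : ∏ j ∈ Finset.range (m+1), F (p j) = 1 := by
          apply Finset.prod_eq_one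
          intro j hj
          exact hk j (by simpa [hkm] using Finset.mem_range.mp hj)
        simp [this, hkm]
      · have hle : F (p m) ≤ c := hc ▸ hFmono (hp hm)
        have hF0 : 0 ≤ F (p m) := (hF01 (p m)).1
        have hP0 : 0 ≤ ∏ j ∈ Finset.range m, F (p j) :=
          Finset.prod_nonneg (fun j _ => (hF01 (p j)).1)
        rw [Finset.prod_range_succ]
        have : m + 1 - k = (m - k) + 1 := by omega
        rw [this, pow_succ]
        exact mul_le_mul (ih hm) hle hF0 (pow_nonneg hc0 _)
  -- term bounds
  have hterm0 : ∀ t, t < k → (∏ j ∈ Finset.range t, F (p j)) * lam (p t) = 0 := by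
    intro t ht
    rw [hlam0 (p t) (hk t ht), mul_zero]
  have hterm : ∀ t, k ≤ t →
      (∏ j ∈ Finset.range t, F (p j)) * lam (p t) ≤ c ^ (t - k) * μ := by
    intro t ht
    have hP0 : 0 ≤ ∏ j ∈ Finset.range t, F (p j) :=
      Finset.prod_nonneg (fun j _ => (hF01 (p j)).1)
    exact mul_le_mul (hprod t ht) (hlam (p t)).2 (hlam (p t)).1 (pow_nonneg hc0 _)
  have key : ∑ t ∈ Finset.range n, (∏ j ∈ Finset.range t, F (p j)) * lam (p t)
      ≤ 1 / (1 - c) * μ := by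
    rcases Nat.le_total n k with hn | hn
    · have : ∑ t ∈ Finset.range n, (∏ j ∈ Finset.range t, F (p j)) * lam (p t) = 0 := by
        apply Finset.sum_eq_zero
        intro t htn
        exact hterm0 t (lt_of_lt_of_le (Finset.mem_range.mp htn) hn)
      rw [this]
      positivity
    · have split : ∑ t ∈ Finset.range n, (∏ j ∈ Finset.range t, F (p j)) * lam (p t)
          = ∑ t ∈ Finset.range k, (∏ j ∈ Finset.range t, F (p j)) * lam (p t)
            + ∑ t ∈ Finset.Ico k n, (∏ j ∈ Finset.range t, F (p j)) * lam (p t) := by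
        rw [Finset.sum_range_add_sum_Ico _ hn]
      rw [split]
      have h1 : ∑ t ∈ Finset.range k, (∏ j ∈ Finset.range t, F (p j)) * lam (p t) = 0 := by
        apply Finset.sum_eq_zero
        intro t htn
        exact hterm0 t (Finset.mem_range.mp htn)
      rw [h1, zero_add]
      calc ∑ t ∈ Finset.Ico k n, (∏ j ∈ Finset.range t, F (p j)) * lam (p t)
          ≤ ∑ t ∈ Finset.Ico k n, c ^ (t - k) * μ := by
            apply Finset.sum_le_sum
            intro t htn
            exact hterm t (Finset.mem_Ico.mp htn).1
        _ = (∑ i ∈ Finset.range (n - k), c ^ i) * μ := by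
            rw [Finset.sum_Ico_eq_sum_range, Finset.sum_mul]
            apply Finset.sum_congr rfl
            intro i _
            congr 1
            congr 1
            omega
        _ ≤ 1 / (1 - c) * μ := by
            apply mul_le_mul_of_nonneg_right _ hμ0
            have hm0 : (0:ℝ) ≤ c ^ (n - k) := pow_nonneg hc0 _
            have heq : (c ^ (n - k) - 1) / (c - 1) = (1 - c ^ (n - k)) / (1 - c) := by
              rw [div_eq_div_iff (by linarith) (by linarith)]
              ring
            rw [geom_sum_eq (ne_of_lt hclt), heq]
            gcongr <;> linarith
  have : (2 - c) / (1 - c) * μ = μ + 1 / (1 - c) * μ := by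
    field_simp
    ring
  rw [this]
  linarith
end

section
/- In any α-balanced sequence with m buyers, every prefix of length i contains at least ⌈α·i/(α+1)⌉ sellers; consequently the sequence (S^α B)^m is a minimum element under the prefix-domination partial order among α-balanced sequences of length (α+1)m. -/
/-- The canonical α-balanced sequence `(S^α B)^m`, where `true` denotes a seller. -/
def canonicalSeq (α m : ℕ) : List Bool :=
  (List.replicate m (List.replicate α true ++ [false])).flatten

lemma canon_succ (α m : ℕ) :
    canonicalSeq α (m+1) = (List.replicate α true ++ [false]) ++ canonicalSeq α m := by
  simp [canonicalSeq, List.replicate_succ]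

lemma canon_count (α m : ℕ) : (canonicalSeq α m).count true = α * m := by
  induction m with
  | zero => simp [canonicalSeq]
  | succ m ih => rw [canon_succ]; simp [List.count_append, ih]; ring

lemma canon_take (α m i : ℕ) :
    (α + 1) * (((canonicalSeq α m).take i).count true) ≤ α * i + α := by
  induction m generalizing i with
  | zero =>
    simp [canonicalSeq]
  | succ m ih =>
    rw [canon_succ, List.take_append, List.count_append]
    have hlb : ((List.replicate α true ++ [false]).length) = α + 1 := by simp
    rw [hlb]
    set c1 := (((List.replicate α true ++ [false]).take i).count true) with hc1
    have h1 : c1 ≤ α := by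
      calc c1 ≤ (List.replicate α true ++ [false]).count true :=
            (List.take_sublist _ _).count_le _
        _ = α := by simp
    have h2 : c1 ≤ i := by
      calc c1 ≤ ((List.replicate α true ++ [false]).take i).length := List.count_le_length
        _ ≤ i := by simp
    have h3 := ih (i - (α + 1))
    rcases le_or_gt i (α + 1) with h | h
    · have : i - (α + 1) = 0 := by omega
      rw [this]
      simp only [List.take_zero, List.count_nil, Nat.add_zero]
      nlinarith
    · have hi : i = (i - (α + 1)) + (α + 1) := by omega
      nlinarith [Nat.sub_add_cancel h.le]

theorem stmt19 (α m : ℕ) (hα : 0 < α) (hm : 0 < m) (σ : List Bool)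
    (hlen : σ.length = (α + 1) * m)
    (hcount : σ.count true = α * m)
    (hbal : ∀ i : ℕ, α * ((σ.take i).count false) ≤ (σ.take i).count true) :
    (∀ i : ℕ, i ≤ σ.length →
      (⌈((α * i : ℕ) : ℚ) / ((α : ℚ) + 1)⌉ : ℤ) ≤ (((σ.take i).count true : ℕ) : ℤ)) ∧
    (∀ i : ℕ, ((canonicalSeq α m).take i).count true ≤ (σ.take i).count true) := by
  have key : ∀ i : ℕ, i ≤ σ.length → α * i ≤ (α + 1) * ((σ.take i).count true) := by
    intro i hi
    have hlt : (σ.take i).length = i := by rw [List.length_take]; omega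
    have hcnt : (σ.take i).count false + (σ.take i).count true = i := by
      rw [List.count_false_add_count_true, hlt]
    have := hbal i
    nlinarith
  constructor
  · intro i hi
    rw [Int.ceil_le]
    have h := key i hi
    rw [div_le_iff₀ (by positivity)]
    push_cast
    have h' : ((α * i : ℕ) : ℚ) ≤ (((α + 1) * ((σ.take i).count true) : ℕ) : ℚ) := by exact_mod_cast h
    push_cast at h'
    linarith
  · intro i
    rcases le_or_gt i σ.length with hi | hi
    · have h1 := key i hi
      have h2 := canon_take α m i
      have : (α + 1) * (((canonicalSeq α m).take i).count true) < (α + 1) * (((σ.take i).count true) + 1) := by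
        nlinarith
      exact Nat.lt_succ_iff.mp (Nat.lt_of_mul_lt_mul_left this)
    · rw [List.take_of_length_le hi.le]
      calc ((canonicalSeq α m).take i).count true
          ≤ (canonicalSeq α m).count true := (List.take_sublist _ _).count_le _
        _ = α * m := canon_count α m
        _ = σ.count true := hcount.symm
end
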